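/- In an 8-dimensional algebra from the class TLb_8 (multiplication table as defined), if the Leibniz identity holds for all triples of basis vectors, then b_{13}=a_{16}, b_{14}=a_{15}-b_{23}, b_{24}=a_{26}, b_{15}=a_{14}-2a_{26}, and b_{34}(a_{26}+2a_{14})=0. -/

import Mathlib

/-- In an algebra from TLb₈, if the Leibniz identity holds for all triples of
basis vectors, then b₁₃ = a₁₆, b₁₄ = a₁₅ - b₂₃, b₂₄ = a₂₆, b₁₅ = a₁₄ - 2a₂₆
and b₃₄(a₂₆ + 2a₁₄) = 0. -/
theorem TLb8_constraints {L : Type*} [AddCommGroup L] [Module ℂ L]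
    (B : L →ₗ[ℂ] L →ₗ[ℂ] L) (e : Module.Basis (Fin 8) ℂ L)
    (b00 b01 b11 a14 a15 a16 a26 b12 b13 b14 b15 b23 b24 b34 : ℂ)
    (h10 : B (e 1) (e 0) = e 2)
    (h20 : B (e 2) (e 0) = e 3)
    (h30 : B (e 3) (e 0) = e 4)
    (h40 : B (e 4) (e 0) = e 5)
    (h50 : B (e 5) (e 0) = e 6)
    (h60 : B (e 6) (e 0) = e 7)
    (h02 : B (e 0) (e 2) = -(e 3))
    (h03 : B (e 0) (e 3) = -(e 4))
    (h04 : B (e 0) (e 4) = -(e 5))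
    (h05 : B (e 0) (e 5) = -(e 6))
    (h06 : B (e 0) (e 6) = -(e 7))
    (h00 : B (e 0) (e 0) = b00 • e 7)
    (h01 : B (e 0) (e 1) = -(e 2) + b01 • e 7)
    (h11 : B (e 1) (e 1) = b11 • e 7)
    (h12 : B (e 1) (e 2) = a14 • e 4 + a15 • e 5 + a16 • e 6 + b12 • e 7)
    (h21 : B (e 2) (e 1) = -(a14 • e 4 + a15 • e 5 + a16 • e 6 + b12 • e 7))
    (h13 : B (e 1) (e 3) = a14 • e 5 + a15 • e 6 + b13 • e 7)
    (h31 : B (e 3) (e 1) = -(a14 • e 5 + a15 • e 6 + b13 • e 7))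
    (h14 : B (e 1) (e 4) = (a14 - a26) • e 6 + b14 • e 7)
    (h41 : B (e 4) (e 1) = -((a14 - a26) • e 6 + b14 • e 7))
    (h15 : B (e 1) (e 5) = b15 • e 7)
    (h51 : B (e 5) (e 1) = -(b15 • e 7))
    (h23 : B (e 2) (e 3) = a26 • e 6 + b23 • e 7)
    (h32 : B (e 3) (e 2) = -(a26 • e 6 + b23 • e 7))
    (h24 : B (e 2) (e 4) = b24 • e 7)
    (h42 : B (e 4) (e 2) = -(b24 • e 7))
    (h34 : B (e 3) (e 4) = (-b34) • e 7)
    (h43 : B (e 4) (e 3) = -((-b34) • e 7))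
    (h16 : B (e 1) (e 6) = (-b34) • e 7)
    (h61 : B (e 6) (e 1) = -((-b34) • e 7))
    (h25 : B (e 2) (e 5) = b34 • e 7)
    (h52 : B (e 5) (e 2) = -(b34 • e 7))
    (h22 : B (e 2) (e 2) = 0) (h33 : B (e 3) (e 3) = 0)
    (h44 : B (e 4) (e 4) = 0) (h55 : B (e 5) (e 5) = 0)
    (h66 : B (e 6) (e 6) = 0)
    (h26 : B (e 2) (e 6) = 0) (h62 : B (e 6) (e 2) = 0)
    (h35 : B (e 3) (e 5) = 0) (h53 : B (e 5) (e 3) = 0)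
    (h36 : B (e 3) (e 6) = 0) (h63 : B (e 6) (e 3) = 0)
    (h45 : B (e 4) (e 5) = 0) (h54 : B (e 5) (e 4) = 0)
    (h46 : B (e 4) (e 6) = 0) (h64 : B (e 6) (e 4) = 0)
    (h56 : B (e 5) (e 6) = 0) (h65 : B (e 6) (e 5) = 0)
    (h7 : ∀ j : Fin 8, B (e 7) (e j) = 0 ∧ B (e j) (e 7) = 0)
    (hleib : ∀ i j k : Fin 8,
      B (e i) (B (e j) (e k)) = B (B (e i) (e j)) (e k) - B (B (e i) (e k)) (e j)) :
    b13 = a16 ∧ b14 = a15 - b23 ∧ b24 = a26 ∧ b15 = a14 - 2 * a26 ∧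
      b34 * (a26 + 2 * a14) = 0 := by

  have h70 : ∀ j : Fin 8, B (e 7) (e j) = 0 := fun j => (h7 j).1
  have h07 : ∀ j : Fin 8, B (e j) (e 7) = 0 := fun j => (h7 j).2
  have E1 := congrArg (fun v => e.repr v 7) (hleib 0 1 2)
  have E2 := congrArg (fun v => e.repr v 7) (hleib 0 1 3)
  have E3 := congrArg (fun v => e.repr v 7) (hleib 0 2 3)
  have E4 := congrArg (fun v => e.repr v 7) (hleib 0 1 4)
  have E5 := congrArg (fun v => e.repr v 7) (hleib 1 2 3)
  simp only [h10,h20,h30,h40,h50,h60,h02,h03,h04,h05,h06,h00,h01,h11,h12,h21,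
    h13,h31,h14,h41,h15,h51,h23,h32,h24,h42,h34,h43,h16,h61,h25,h52,h22,h33,
    h44,h55,h66,h26,h62,h35,h53,h36,h63,h45,h54,h46,h64,h56,h65,h70,h07,
    map_add, map_smul, map_neg, map_zero, map_sub,
    LinearMap.add_apply, LinearMap.smul_apply, LinearMap.neg_apply,
    LinearMap.zero_apply, LinearMap.sub_apply,
    smul_zero, neg_zero, add_zero, zero_add, smul_neg, neg_neg,
    Finsupp.coe_add, Finsupp.coe_smul, Finsupp.coe_neg, Finsupp.coe_sub,
    Pi.add_apply, Pi.smul_apply, Pi.neg_apply, Pi.sub_apply,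
    Module.Basis.repr_self, smul_eq_mul, Finsupp.coe_zero, Pi.zero_apply] at E1 E2 E3 E4 E5
  simp only [Finsupp.single_apply, show ((2:Fin 8) = 7) = False by simp,
    show ((3:Fin 8) = 7) = False by simp, show ((4:Fin 8) = 7) = False by simp,
    show ((5:Fin 8) = 7) = False by simp, show ((6:Fin 8) = 7) = False by simp,
    if_true, if_false, mul_zero, mul_one, add_zero, zero_add, neg_zero] at E1 E2 E3 E4 E5
  exact ⟨by linear_combination E1, by linear_combination E2, by linear_combination E3,
    by linear_combination E4 - E3, by linear_combination -E5⟩
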